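/- Define f : [0,1] → [0,1] by f(x) = Σ_{i=1}^∞ x_i · 2^(Σ_{j=1}^{i−1} x_j) · 3^(−i), where x = Σ_{i=1}^∞ x_i/2^i is a binary expansion of x with x_i ∈ {0,1}. Then this series converges absolutely, and its value does not depend on the choice of binary expansion: if x = Σ_{i=1}^k x_i/2^i + 1/2^{k+1} and also x = Σ_{i=1}^k x_i/2^i + Σ_{i=k+2}^∞ 1/2^i, both expansions give the same value of f(x). -/

import Mathlib

/-- The `i`-th term (for position `i+1`) of the series
`f(x) = Σ_{i≥1} x_i · 2^(Σ_{j=1}^{i-1} x_j) · 3^{-i}` for a binary digit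
sequence `b` (indexed from 1). -/
noncomputable def salemTerm (b : ℕ → ℕ) (i : ℕ) : ℝ :=
  (b (i + 1) : ℝ) * 2 ^ (∑ j ∈ Finset.Icc 1 i, b j) * (1 / 3 : ℝ) ^ (i + 1)

lemma salemTerm_nonneg (b : ℕ → ℕ) (i : ℕ) : 0 ≤ salemTerm b i := by
  unfold salemTerm; positivity

lemma salemTerm_le (b : ℕ → ℕ) (hb : ∀ i, b i ≤ 1) (i : ℕ) :
    salemTerm b i ≤ (2 / 3 : ℝ) ^ i := by
  unfold salemTerm
  have h1 : (b (i + 1) : ℝ) ≤ 1 := by exact_mod_cast hb (i + 1)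
  have h2 : (∑ j ∈ Finset.Icc 1 i, b j) ≤ i := by
    calc ∑ j ∈ Finset.Icc 1 i, b j ≤ ∑ _j ∈ Finset.Icc 1 i, 1 :=
          Finset.sum_le_sum fun j _ => hb j
      _ = i := by simp
  have h3 : (2 : ℝ) ^ (∑ j ∈ Finset.Icc 1 i, b j) ≤ 2 ^ i :=
    pow_le_pow_right₀ (by norm_num) h2
  calc (b (i + 1) : ℝ) * 2 ^ (∑ j ∈ Finset.Icc 1 i, b j) * (1 / 3 : ℝ) ^ (i + 1)
      ≤ 1 * 2 ^ i * (1 / 3 : ℝ) ^ (i + 1) := by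
        apply mul_le_mul _ le_rfl (by positivity) (by positivity)
        exact mul_le_mul h1 h3 (by positivity) (by norm_num)
    _ = (2 / 3 : ℝ) ^ i * (1 / 3) := by
        rw [one_mul, pow_succ, div_pow]; field_simp
        have e : (3:ℝ) ^ i * (2 / 3) ^ i = 2 ^ i := by rw [← mul_pow]; norm_num
        linear_combination -e
    _ ≤ (2 / 3 : ℝ) ^ i := by
        nlinarith [pow_nonneg (by norm_num : (0:ℝ) ≤ 2/3) i]

lemma salemSummable (b : ℕ → ℕ) (hb : ∀ i, b i ≤ 1) :
    Summable fun i => |salemTerm b i| := by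
  refine Summable.of_nonneg_of_le (fun i => abs_nonneg _) ?_
    (summable_geometric_of_lt_one (r := (2/3 : ℝ)) (by norm_num) (by norm_num))
  intro i
  rw [abs_of_nonneg (salemTerm_nonneg b i)]
  exact salemTerm_le b hb i

theorem salemSeries_summable_and_welldef :
    (∀ b : ℕ → ℕ, (∀ i, b i ≤ 1) → Summable fun i => |salemTerm b i|) ∧
    (∀ b : ℕ → ℕ, (∀ i, b i ≤ 1) → ∀ k : ℕ,
      (∑' i, salemTerm (fun j => if j ≤ k then b j else if j = k + 1 then 1 else 0) i) =
      (∑' i, salemTerm (fun j => if j ≤ k then b j else if j = k + 1 then 0 else 1) i)) := by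
  refine ⟨salemSummable, ?_⟩
  intro b hb k
  set b1 : ℕ → ℕ := fun j => if j ≤ k then b j else if j = k + 1 then 1 else 0 with hb1def
  set b2 : ℕ → ℕ := fun j => if j ≤ k then b j else if j = k + 1 then 0 else 1 with hb2def
  have hb2 : ∀ i, b2 i ≤ 1 := by
    intro i; simp only [hb2def]; split_ifs with h1 h2
    · exact hb i
    · norm_num
    · norm_num
  set S : ℕ := ∑ j ∈ Finset.Icc 1 k, b j with hS
  -- digit sums agree with b on prefixes
  have hsum1 : ∀ i, i ≤ k → (∑ j ∈ Finset.Icc 1 i, b1 j) = ∑ j ∈ Finset.Icc 1 i, b j := by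
    intro i hi
    apply Finset.sum_congr rfl
    intro j hj
    have : j ≤ k := le_trans (Finset.mem_Icc.mp hj).2 hi
    simp [hb1def, this]
  have hsum2 : ∀ i, i ≤ k → (∑ j ∈ Finset.Icc 1 i, b2 j) = ∑ j ∈ Finset.Icc 1 i, b j := by
    intro i hi
    apply Finset.sum_congr rfl
    intro j hj
    have : j ≤ k := le_trans (Finset.mem_Icc.mp hj).2 hi
    simp [hb2def, this]
  -- tail digit sums for b2
  have hsum2tail : ∀ n : ℕ, (∑ j ∈ Finset.Icc 1 (k + 1 + n), b2 j) = S + n := by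
    intro n
    induction n with
    | zero =>
      rw [Nat.add_zero, Finset.sum_Icc_succ_top (Nat.le_add_left 1 k), hsum2 k le_rfl]
      have : b2 (k + 1) = 0 := by simp [hb2def]
      simp [this, hS]
    | succ n ih =>
      have h : 1 ≤ k + 1 + (n + 1) := by omega
      have : k + 1 + (n + 1) = (k + 1 + n) + 1 := by omega
      rw [this, Finset.sum_Icc_succ_top (by omega : 1 ≤ k + 1 + n + 1), ih]
      have : b2 (k + 1 + n + 1) = 1 := by
        simp only [hb2def]
        rw [if_neg (by omega), if_neg (by omega)]
      rw [this]; omega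
  -- terms of b1 vanish for i ≥ k+1
  have hzero1 : ∀ i ∉ Finset.range (k + 1), salemTerm b1 i = 0 := by
    intro i hi
    rw [Finset.mem_range, not_lt] at hi
    have : b1 (i + 1) = 0 := by
      simp only [hb1def]
      rw [if_neg (by omega), if_neg (by omega)]
    unfold salemTerm
    rw [this]; simp
  -- term of b2 at i = k is 0
  have hb2k : salemTerm b2 k = 0 := by
    have : b2 (k + 1) = 0 := by simp [hb2def]
    unfold salemTerm
    rw [this]; simp
  -- terms for i < k agree
  have hagree : ∀ i < k, salemTerm b1 i = salemTerm b2 i := by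
    intro i hi
    unfold salemTerm
    rw [hsum1 i (le_of_lt hi), hsum2 i (le_of_lt hi)]
    have h1 : b1 (i + 1) = b (i + 1) := by simp [hb1def, Nat.succ_le_of_lt hi]
    have h2 : b2 (i + 1) = b (i + 1) := by simp [hb2def, Nat.succ_le_of_lt hi]
    rw [h1, h2]
  -- value of b1 term at k
  have hb1k : salemTerm b1 k = 2 ^ S * (1 / 3 : ℝ) ^ (k + 1) := by
    unfold salemTerm
    rw [hsum1 k le_rfl]
    have : b1 (k + 1) = 1 := by simp [hb1def]
    rw [this]; push_cast; ring
  -- tail terms of b2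
  have htail : ∀ n : ℕ, salemTerm b2 (n + (k + 1)) =
      (2 ^ S * (1 / 3 : ℝ) ^ (k + 2)) * (2 / 3 : ℝ) ^ n := by
    intro n
    unfold salemTerm
    have h1 : b2 (n + (k + 1) + 1) = 1 := by
      simp only [hb2def]
      rw [if_neg (by omega), if_neg (by omega)]
    have h2 : n + (k + 1) = k + 1 + n := by omega
    rw [h1, h2, hsum2tail n]
    rw [pow_add, div_pow, one_div, one_pow]
    push_cast
    rw [pow_add, pow_add]
    field_simp
    have e1 : (1 / 3 : ℝ) ^ k * 3 ^ k = 1 := by rw [← mul_pow]; norm_num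
    have e2 : (2 / 3 : ℝ) ^ n * 3 ^ n = 2 ^ n := by rw [← mul_pow]; norm_num
    linear_combination (-(2 / 3 : ℝ) ^ n * 3 ^ n) * e1 - e2
  have hsummable2 : Summable (salemTerm b2) := (salemSummable b2 hb2).of_abs
  have htsum1 : (∑' i, salemTerm b1 i) = ∑ i ∈ Finset.range (k + 1), salemTerm b1 i :=
    tsum_eq_sum hzero1
  have htsum2 : (∑ i ∈ Finset.range (k + 1), salemTerm b2 i) +
      (∑' n, salemTerm b2 (n + (k + 1))) = ∑' i, salemTerm b2 i :=
    Summable.sum_add_tsum_nat_add (k + 1) hsummable2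
  have hgeo : (∑' n : ℕ, salemTerm b2 (n + (k + 1))) = 2 ^ S * (1 / 3 : ℝ) ^ (k + 1) := by
    calc (∑' n : ℕ, salemTerm b2 (n + (k + 1)))
        = ∑' n : ℕ, (2 ^ S * (1 / 3 : ℝ) ^ (k + 2)) * (2 / 3 : ℝ) ^ n := by
          exact tsum_congr htail
      _ = (2 ^ S * (1 / 3 : ℝ) ^ (k + 2)) * ∑' n : ℕ, (2 / 3 : ℝ) ^ n := tsum_mul_left
      _ = (2 ^ S * (1 / 3 : ℝ) ^ (k + 2)) * (1 - 2 / 3)⁻¹ := by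
          rw [tsum_geometric_of_lt_one (by norm_num) (by norm_num)]
      _ = 2 ^ S * (1 / 3 : ℝ) ^ (k + 1) := by
          rw [pow_succ]; norm_num; ring
  rw [htsum1, ← htsum2, hgeo]
  rw [Finset.sum_range_succ, Finset.sum_range_succ, hb1k, hb2k]
  rw [Finset.sum_congr rfl (fun i hi => hagree i (Finset.mem_range.mp hi))]
  ring
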